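/- Let U be a unitary such that U† c_μ U = Σ_ν R_{μν} c_ν with R ∈ SO(2n), where the c_μ satisfy Clifford relations. Then for indices α_1 < ⋯ < α_k, U† (c_{α_1} ⋯ c_{α_k}) U = Σ_{β_1 < ⋯ < β_k} det(R[{α_1,...,α_k}, {β_1,...,β_k}]) · c_{β_1} ⋯ c_{β_k}, where R[S,T] is the k×k submatrix of R with rows S and columns T. -/

import Mathlib

open Matrix

section GCMHelpers

variable {A : Type*} [Ring A] [Algebra ℝ A] {N : ℕ}

lemma gcm_sq (c : Fin N → A)
    (hc : ∀ μ ν, c μ * c ν + c ν * c μ = if μ = ν then (2 : A) else 0)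
    (μ : Fin N) : c μ * c μ = 1 := by
  have h := hc μ μ
  rw [if_pos rfl] at h
  have h2 : (2 : ℝ) • (c μ * c μ) = (2 : ℝ) • (1 : A) := by
    rw [two_smul, h, Algebra.smul_def, mul_one]
    exact (map_ofNat _ 2).symm
  have := congrArg (fun z => (2 : ℝ)⁻¹ • z) h2
  simpa [smul_smul] using this

lemma gcm_anti (c : Fin N → A)
    (hc : ∀ μ ν, c μ * c ν + c ν * c μ = if μ = ν then (2 : A) else 0)
    {μ ν : Fin N} (h : μ ≠ ν) : c μ * c ν = -(c ν * c μ) := by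
  have h' := hc μ ν
  rw [if_neg h] at h'
  linear_combination (norm := noncomm_ring) h'

/-- moving `c (β i)` into an increasing product, `succAbove` form. -/
lemma gcm_A (c : Fin N → A)
    (hc : ∀ μ ν, c μ * c ν + c ν * c μ = if μ = ν then (2 : A) else 0) :
    ∀ (m : ℕ) (β : Fin (m + 1) → Fin N), StrictMono β → ∀ i : Fin (m + 1),
      c (β i) * (List.ofFn fun j => c (β (i.succAbove j))).prod
        = ((-1 : ℝ) ^ (i : ℕ)) • (List.ofFn fun j => c (β j)).prod := by
  intro m
  induction m with
  | zero =>
    intro β hβ i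
    fin_cases i
    simp [List.ofFn_succ]
  | succ m ih =>
    intro β hβ i
    induction i using Fin.cases with
    | zero =>
      rw [List.ofFn_succ (f := fun j => c (β j)), List.prod_cons]
      simp [Fin.succAbove_zero]
    | succ i' =>
      have hcomp : StrictMono (fun j : Fin (m + 1) => β j.succ) :=
        hβ.comp fun a b hab => Fin.succ_lt_succ_iff.mpr hab
      have hlist : (List.ofFn fun j : Fin (m + 1) => c (β (i'.succ.succAbove j)))
          = c (β 0) :: List.ofFn fun j : Fin m => c (β (i'.succAbove j).succ) := by
        rw [List.ofFn_succ]
        simp [Fin.succ_succAbove_zero, Fin.succ_succAbove_succ]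
      rw [hlist, List.prod_cons, ← mul_assoc,
        gcm_anti c hc (hβ.injective.ne (Fin.succ_ne_zero i')), neg_mul, mul_assoc]
      have := ih (fun j => β j.succ) hcomp i'
      rw [this]
      rw [List.ofFn_succ (f := fun j => c (β j)), List.prod_cons]
      rw [mul_smul_comm]
      rw [Fin.val_succ, pow_succ]
      simp [smul_smul, mul_comm]

/-- removing `c (β i)` from an increasing product. -/
lemma gcm_B (c : Fin N → A)
    (hc : ∀ μ ν, c μ * c ν + c ν * c μ = if μ = ν then (2 : A) else 0)
    {m : ℕ} (β : Fin (m + 1) → Fin N) (hβ : StrictMono β) (i : Fin (m + 1)) :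
    c (β i) * (List.ofFn fun j => c (β j)).prod
      = ((-1 : ℝ) ^ (i : ℕ)) • (List.ofFn fun j => c (β (i.succAbove j))).prod := by
  have h := gcm_A c hc m β hβ i
  have hss : ((-1 : ℝ) ^ (i : ℕ)) * ((-1 : ℝ) ^ (i : ℕ)) = 1 := by
    rw [← mul_pow]; norm_num
  have h2 : (List.ofFn fun j => c (β (i.succAbove j))).prod
      = ((-1 : ℝ) ^ (i : ℕ)) • (c (β i) * (List.ofFn fun j => c (β j)).prod) := by
    conv_lhs => rw [← one_mul (List.ofFn fun j => c (β (i.succAbove j))).prod,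
      ← gcm_sq c hc (β i), mul_assoc, h, mul_smul_comm]
  rw [h2, smul_smul, hss, one_smul]

/-- number of values of a tuple below `ν`. -/
def gcmPos {m : ℕ} (γ : Fin m → Fin N) (ν : Fin N) : ℕ :=
  (Finset.univ.filter fun j => γ j < ν).card

lemma gcmPos_le {m : ℕ} (γ : Fin m → Fin N) (ν : Fin N) : gcmPos γ ν ≤ m := by
  classical
  have := Finset.card_filter_le (Finset.univ : Finset (Fin m)) (fun j => γ j < ν)
  simpa [gcmPos] using this

lemma gcm_card_lt (k t : ℕ) (ht : t ≤ k) :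
    (Finset.univ.filter fun j : Fin k => (j : ℕ) < t).card = t := by
  have : (Finset.univ.filter fun j : Fin k => (j : ℕ) < t)
      = Finset.univ.map (Fin.castLEEmb ht) := by
    ext j
    simp only [Finset.mem_filter, Finset.mem_univ, true_and, Finset.mem_map]
    constructor
    · intro hj
      exact ⟨⟨(j : ℕ), hj⟩, by simp [Fin.castLEEmb, Fin.castLE]⟩
    · rintro ⟨a, ha⟩
      have : ((Fin.castLEEmb ht a : Fin k) : ℕ) = (a : ℕ) := rfl
      rw [← ha, this]
      exact lt_of_lt_of_le a.isLt le_rfl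
  rw [this, Finset.card_map, Finset.card_fin]

lemma gcm_mem_iff {m : ℕ} {γ : Fin m → Fin N} (hγ : StrictMono γ) (ν : Fin N) (j : Fin m) :
    γ j < ν ↔ (j : ℕ) < gcmPos γ ν := by
  constructor
  · intro h
    have hsub : (Finset.univ.filter fun j' : Fin m => (j' : ℕ) < (j : ℕ) + 1)
        ⊆ Finset.univ.filter fun j' => γ j' < ν := by
      intro j' hj'
      simp only [Finset.mem_filter, Finset.mem_univ, true_and] at hj' ⊢
      have : j' ≤ j := by omega
      exact lt_of_le_of_lt (hγ.monotone this) h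
    have hcard := Finset.card_le_card hsub
    rwa [gcm_card_lt m ((j : ℕ) + 1) j.isLt] at hcard
  · intro h
    by_contra hcon
    have hsub : (Finset.univ.filter fun j' => γ j' < ν)
        ⊆ Finset.univ.filter fun j' : Fin m => (j' : ℕ) < (j : ℕ) := by
      intro j' hj'
      simp only [Finset.mem_filter, Finset.mem_univ, true_and] at hj' ⊢
      by_contra h2
      have : j ≤ j' := by omega
      exact hcon (lt_of_le_of_lt (hγ.monotone this) hj')
    have hcard := Finset.card_le_card hsub
    rw [gcm_card_lt m (j : ℕ) (le_of_lt j.isLt)] at hcard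
    have : gcmPos γ ν ≤ (j : ℕ) := hcard
    omega

lemma gcm_insert_strictMono {m : ℕ} {γ : Fin m → Fin N} (hγ : StrictMono γ) {ν : Fin N}
    (hν : ∀ j, γ j ≠ ν) :
    StrictMono ((⟨gcmPos γ ν, Nat.lt_succ_of_le (gcmPos_le γ ν)⟩ : Fin (m + 1)).insertNth ν γ) := by
  set p : Fin (m + 1) := ⟨gcmPos γ ν, Nat.lt_succ_of_le (gcmPos_le γ ν)⟩ with hp
  have key1 : ∀ j : Fin m, p.succAbove j < p ↔ γ j < ν := by
    intro j
    rw [Fin.succAbove_lt_iff_castSucc_lt]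
    rw [Fin.lt_def]
    simp only [Fin.coe_castSucc, hp]
    exact (gcm_mem_iff hγ ν j).symm
  have key2 : ∀ j : Fin m, p < p.succAbove j ↔ ν < γ j := by
    intro j
    constructor
    · intro h
      rcases (hν j).lt_or_gt with h1 | h1
      · exact absurd ((key1 j).mpr h1) (asymm h)
      · exact h1
    · intro h
      rcases lt_trichotomy p (p.succAbove j) with h1 | h1 | h1
      · exact h1
      · exact absurd h1.symm (Fin.succAbove_ne p j)
      · exact absurd (lt_trans ((key1 j).mp h1) h) (lt_irrefl _)
  intro a b hab
  rcases eq_or_ne a p with rfl | ha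
  · obtain ⟨j, rfl⟩ := Fin.exists_succAbove_eq (x := b) (ne_of_gt hab)
    rw [Fin.insertNth_apply_same, Fin.insertNth_apply_succAbove]
    exact (key2 j).mp hab
  · obtain ⟨j, rfl⟩ := Fin.exists_succAbove_eq ha
    rcases eq_or_ne b p with rfl | hb
    · rw [Fin.insertNth_apply_same, Fin.insertNth_apply_succAbove]
      exact (key1 j).mp hab
    · obtain ⟨j', rfl⟩ := Fin.exists_succAbove_eq hb
      rw [Fin.insertNth_apply_succAbove, Fin.insertNth_apply_succAbove]
      exact hγ (Fin.succAbove_lt_succAbove_iff.mp hab)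

lemma gcm_pos_succAbove {m : ℕ} {β : Fin (m + 1) → Fin N} (hβ : StrictMono β) (i : Fin (m + 1)) :
    gcmPos (fun j => β (i.succAbove j)) (β i) = (i : ℕ) := by
  unfold gcmPos
  have : ∀ j : Fin m, (β (i.succAbove j) < β i) = ((j : ℕ) < (i : ℕ)) := by
    intro j
    rw [hβ.lt_iff_lt, Fin.succAbove_lt_iff_castSucc_lt, Fin.lt_def]
    simp
  simp only [this]
  exact gcm_card_lt m (i : ℕ) (Nat.lt_succ_iff.mp i.isLt)

lemma gcm_pos_self {m : ℕ} {β : Fin m → Fin N} (hβ : StrictMono β) (i : Fin m) :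
    gcmPos β (β i) = (i : ℕ) := by
  unfold gcmPos
  have : ∀ j : Fin m, (β j < β i) = ((j : ℕ) < (i : ℕ)) := by
    intro j
    rw [hβ.lt_iff_lt, Fin.lt_def]
  simp only [this]
  exact gcm_card_lt m (i : ℕ) (le_of_lt i.isLt)

lemma gcm_eta {α : Type*} {m : ℕ} (β : Fin (m + 1) → α) (i : Fin (m + 1)) :
    i.insertNth (β i) (fun j => β (i.succAbove j)) = β := by
  funext x
  rcases eq_or_ne x i with rfl | hx
  · rw [Fin.insertNth_apply_same]
  · obtain ⟨j, rfl⟩ := Fin.exists_succAbove_eq hx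
    rw [Fin.insertNth_apply_succAbove]

/-- the central bijection between (value, k-tuple not containing it) and
(position, (k+1)-tuple). -/
lemma gcm_bij {M : Type*} [AddCommMonoid M] (m : ℕ)
    (F : Fin N × (Fin m → Fin N) → M) :
    ∑ q ∈ ((Finset.univ ×ˢ Finset.univ.filter fun γ : Fin m → Fin N =>
          ∀ i j, i < j → γ i < γ j).filter fun q => ∀ j, q.2 j ≠ q.1), F q
      = ∑ q ∈ ((Finset.univ : Finset (Fin (m + 1))) ×ˢ
          Finset.univ.filter fun β : Fin (m + 1) → Fin N => ∀ i j, i < j → β i < β j),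
          F (q.2 q.1, q.2 ∘ q.1.succAbove) := by
  classical
  refine Finset.sum_bij'
    (i := fun q _ => ((⟨gcmPos q.2 q.1, Nat.lt_succ_of_le (gcmPos_le q.2 q.1)⟩ : Fin (m + 1)),
      Fin.insertNth ⟨gcmPos q.2 q.1, Nat.lt_succ_of_le (gcmPos_le q.2 q.1)⟩ q.1 q.2))
    (j := fun q _ => (q.2 q.1, q.2 ∘ q.1.succAbove)) ?hi ?hj ?left ?right ?h
  case hi =>
    intro q hq
    simp only [Finset.mem_filter, Finset.mem_product, Finset.mem_univ, true_and] at hq ⊢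
    have hγ : StrictMono q.2 := fun a b h => hq.1 a b h
    intro a b hab
    exact gcm_insert_strictMono hγ hq.2 hab
  case hj =>
    intro q hq
    simp only [Finset.mem_filter, Finset.mem_product, Finset.mem_univ, true_and] at hq ⊢
    have hβ : StrictMono q.2 := fun a b h => hq a b h
    constructor
    · intro a b hab
      exact hβ (Fin.succAbove_lt_succAbove_iff.mpr hab)
    · intro j
      exact fun h => Fin.succAbove_ne q.1 j (hβ.injective h)
  case left =>
    intro q hq
    have h1 : Fin.insertNth (α := fun _ => Fin N)
        (⟨gcmPos q.2 q.1, Nat.lt_succ_of_le (gcmPos_le q.2 q.1)⟩ : Fin (m + 1))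
        q.1 q.2 ∘ Fin.succAbove ⟨gcmPos q.2 q.1, Nat.lt_succ_of_le (gcmPos_le q.2 q.1)⟩ = q.2 := by
      funext j
      exact Fin.insertNth_apply_succAbove _ _ _ _
    have h2 : Fin.insertNth (α := fun _ => Fin N)
        (⟨gcmPos q.2 q.1, Nat.lt_succ_of_le (gcmPos_le q.2 q.1)⟩ : Fin (m + 1))
        q.1 q.2 ⟨gcmPos q.2 q.1, Nat.lt_succ_of_le (gcmPos_le q.2 q.1)⟩ = q.1 :=
      Fin.insertNth_apply_same _ _ _
    exact Prod.ext h2 h1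
  case right =>
    intro q hq
    simp only [Finset.mem_filter, Finset.mem_product, Finset.mem_univ, true_and] at hq
    have hβ : StrictMono q.2 := fun a b h => hq a b h
    have hpos : gcmPos (q.2 ∘ q.1.succAbove) (q.2 q.1) = (q.1 : ℕ) :=
      gcm_pos_succAbove hβ q.1
    have h1 : (⟨gcmPos (q.2 ∘ q.1.succAbove) (q.2 q.1),
        Nat.lt_succ_of_le (gcmPos_le _ _)⟩ : Fin (m + 1)) = q.1 := Fin.ext hpos
    refine Prod.ext h1 ?_
    show Fin.insertNth _ _ _ = q.2
    rw [h1]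
    exact gcm_eta q.2 q.1
  case h =>
    intro q hq
    have h1 : Fin.insertNth (α := fun _ => Fin N)
        (⟨gcmPos q.2 q.1, Nat.lt_succ_of_le (gcmPos_le q.2 q.1)⟩ : Fin (m + 1))
        q.1 q.2 ∘ Fin.succAbove ⟨gcmPos q.2 q.1, Nat.lt_succ_of_le (gcmPos_le q.2 q.1)⟩ = q.2 := by
      funext j
      exact Fin.insertNth_apply_succAbove _ _ _ _
    have h2 : Fin.insertNth (α := fun _ => Fin N)
        (⟨gcmPos q.2 q.1, Nat.lt_succ_of_le (gcmPos_le q.2 q.1)⟩ : Fin (m + 1))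
        q.1 q.2 ⟨gcmPos q.2 q.1, Nat.lt_succ_of_le (gcmPos_le q.2 q.1)⟩ = q.1 :=
      Fin.insertNth_apply_same _ _ _
    simp only
    rw [h1, h2]

lemma gcm_det_updateRow_sum {n' : Type*} [DecidableEq n'] [Fintype n']
    (Q : Matrix n' n' ℝ) (j : n') {ι : Type*} (s : Finset ι) (f : ι → n' → ℝ) :
    (Q.updateRow j (∑ i ∈ s, f i)).det = ∑ i ∈ s, (Q.updateRow j (f i)).det := by
  classical
  induction s using Finset.induction_on with
  | empty =>
    simp only [Finset.sum_empty]
    exact Matrix.det_eq_zero_of_row_eq_zero j (by simp)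
  | insert _ _ h ih =>
    rw [Finset.sum_insert h, Finset.sum_insert h, ← ih, Matrix.det_updateRow_add]

/-- the cancellation of the shorter terms. -/
lemma gcm_zero {m : ℕ} (R : Matrix (Fin N) (Fin N) ℝ) (hR : R * Rᵀ = 1)
    (r : Fin N) (δ : Fin (m + 1) → Fin N) (hr : ∀ a, r ≠ δ a)
    {γ : Fin m → Fin N} (hγ : StrictMono γ) :
    ∑ ν ∈ Finset.univ.filter (fun ν => ∀ j, γ j ≠ ν),
      ((-1 : ℝ) ^ gcmPos γ ν * R r ν *
        (Matrix.of fun a b => R (δ a)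
          (Fin.insertNth (α := fun _ => Fin N)
            (⟨gcmPos γ ν, Nat.lt_succ_of_le (gcmPos_le γ ν)⟩ : Fin (m + 1)) ν γ b)).det)
      = 0 := by
  classical
  set Nmat : Fin N → Matrix (Fin (m + 1)) (Fin (m + 1)) ℝ :=
    fun ν => Matrix.of fun a b => R (δ a) (Fin.cons (α := fun _ => Fin N) ν γ b) with hNmat
  have ha : ∀ ν : Fin N,
      (-1 : ℝ) ^ gcmPos γ ν * R r ν *
        (Matrix.of fun a b => R (δ a)
          (Fin.insertNth (α := fun _ => Fin N)
            (⟨gcmPos γ ν, Nat.lt_succ_of_le (gcmPos_le γ ν)⟩ : Fin (m + 1)) ν γ b)).det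
      = R r ν * (Nmat ν).det := by
    intro ν
    set p : Fin (m + 1) := ⟨gcmPos γ ν, Nat.lt_succ_of_le (gcmPos_le γ ν)⟩ with hp
    set M : Matrix (Fin (m + 1)) (Fin (m + 1)) ℝ :=
      Matrix.of fun a b => R (δ a) (Fin.insertNth (α := fun _ => Fin N) p ν γ b) with hM
    have hsub : Nmat ν = M.submatrix id ⇑(p.cycleRange.symm) := by
      ext a b
      simp only [hNmat, hM, Matrix.submatrix_apply, Matrix.of_apply, id_eq]
      congr 1
      induction b using Fin.cases with
      | zero =>
        have h0 : p.cycleRange.symm 0 = p := by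
          rw [Equiv.symm_apply_eq, Fin.cycleRange_self]
        rw [h0, Fin.cons_zero, Fin.insertNth_apply_same]
      | succ j =>
        have h0 : p.cycleRange.symm j.succ = p.succAbove j := by
          rw [Equiv.symm_apply_eq, Fin.cycleRange_succAbove]
        rw [h0, Fin.cons_succ, Fin.insertNth_apply_succAbove]
    have hdet : (Nmat ν).det = (-1 : ℝ) ^ gcmPos γ ν * M.det := by
      rw [hsub, Matrix.det_permute']
      congr 1
      have : Equiv.Perm.sign p.cycleRange.symm = (-1 : ℤˣ) ^ (p : ℕ) := by
        rw [Equiv.Perm.sign_symm, Fin.sign_cycleRange]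
      rw [this]
      push_cast
      rfl
    rw [hdet]
    ring
  rw [Finset.sum_congr rfl fun ν _ => ha ν]
  rw [Finset.sum_subset (Finset.filter_subset _ _) ?hvanish]
  case hvanish =>
    intro ν _ hν
    simp only [Finset.mem_filter, Finset.mem_univ, true_and, not_forall, not_not] at hν
    obtain ⟨j, hj⟩ := hν
    have : (Nmat ν).det = 0 := by
      apply Matrix.det_zero_of_column_eq (Fin.succ_ne_zero j).symm
      intro a
      simp [hNmat, hj]
    rw [this, mul_zero]
  set Q : Matrix (Fin (m + 1)) (Fin (m + 1)) ℝ :=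
    Matrix.of fun b a => R (δ a) (Fin.cons (α := fun _ => Fin N) r γ b) with hQ
  have hupd : ∀ ν, (Nmat ν)ᵀ = Q.updateRow 0 (fun a => R (δ a) ν) := by
    intro ν
    ext b a
    induction b using Fin.cases with
    | zero => simp [hNmat, hQ, Matrix.updateRow_self]
    | succ j =>
      rw [Matrix.updateRow_ne (Fin.succ_ne_zero j)]
      simp [hNmat, hQ]
  have hcongr : ∀ ν, R r ν * (Nmat ν).det
      = (Q.updateRow 0 (R r ν • fun a => R (δ a) ν)).det := by
    intro ν
    rw [← Matrix.det_transpose (Nmat ν), hupd ν, Matrix.det_updateRow_smul]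
  rw [Finset.sum_congr rfl fun ν _ => hcongr ν]
  rw [← gcm_det_updateRow_sum]
  have hzero : (∑ ν : Fin N, R r ν • fun a => R (δ a) ν) = (fun _ => (0 : ℝ)) := by
    funext a
    have h1 : (∑ ν : Fin N, R r ν • fun a => R (δ a) ν) a
        = ∑ ν : Fin N, R r ν * R (δ a) ν := by
      rw [Finset.sum_apply]
      simp [mul_comm]
    rw [h1]
    have h2 : ∑ ν : Fin N, R r ν * R (δ a) ν = (R * Rᵀ) r (δ a) := by
      rw [Matrix.mul_apply]
      simp [Matrix.transpose_apply]
    rw [h2, hR, Matrix.one_apply_ne (hr a)]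
  rw [hzero]
  exact Matrix.det_eq_zero_of_row_eq_zero 0 (by simp)

end GCMHelpers

lemma gcm_out {A : Type*} [Ring A] [Algebra ℝ A] {N : ℕ} (c : Fin N → A)
    (hc : ∀ μ ν, c μ * c ν + c ν * c μ = if μ = ν then (2 : A) else 0)
    (R : Matrix (Fin N) (Fin N) ℝ)
    (k : ℕ) (α : Fin (k + 1) → Fin N) :
    ∑ q ∈ ((Finset.univ ×ˢ Finset.univ.filter fun γ : Fin k → Fin N =>
          ∀ i j, i < j → γ i < γ j).filter fun q => ∀ j, q.2 j ≠ q.1),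
        (R (α 0) q.1 * (Matrix.of fun i j => R (α i.succ) (q.2 j)).det) •
          (c q.1 * (List.ofFn fun i => c (q.2 i)).prod)
      = ∑ β ∈ Finset.univ.filter fun β : Fin (k + 1) → Fin N => ∀ i j, i < j → β i < β j,
          (Matrix.of fun i j => R (α i) (β j)).det • (List.ofFn fun i => c (β i)).prod := by
  classical
  rw [gcm_bij k]
  rw [Finset.sum_product, Finset.sum_comm]
  refine Finset.sum_congr rfl fun β hβmem => ?_
  simp only [Finset.mem_filter, Finset.mem_univ, true_and] at hβmem
  have hβ : StrictMono β := fun a b h => hβmem a b h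
  simp only [Function.comp]
  simp_rw [gcm_A c hc k β hβ, smul_smul, ← Finset.sum_smul]
  congr 1
  rw [Matrix.det_succ_row_zero]
  refine Finset.sum_congr rfl fun i _ => ?_
  have hsub : ((Matrix.of fun a b => R (α a) (β b)).submatrix Fin.succ i.succAbove)
      = Matrix.of fun a b => R (α a.succ) (β (i.succAbove b)) := by
    ext a b
    simp [Matrix.submatrix_apply]
  rw [hsub]
  simp only [Matrix.of_apply]
  ring

lemma gcm_in {A : Type*} [Ring A] [Algebra ℝ A] {N : ℕ} (c : Fin N → A)
    (hc : ∀ μ ν, c μ * c ν + c ν * c μ = if μ = ν then (2 : A) else 0)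
    (R : Matrix (Fin N) (Fin N) ℝ) (hR : R * Rᵀ = 1)
    (k : ℕ) (α : Fin (k + 1) → Fin N) (hα : Function.Injective α) :
    ∑ q ∈ ((Finset.univ ×ˢ Finset.univ.filter fun γ : Fin k → Fin N =>
          ∀ i j, i < j → γ i < γ j).filter fun q => ¬ ∀ j, q.2 j ≠ q.1),
        (R (α 0) q.1 * (Matrix.of fun i j => R (α i.succ) (q.2 j)).det) •
          (c q.1 * (List.ofFn fun i => c (q.2 i)).prod) = 0 := by
  classical
  match k with
  | 0 =>
    rw [Finset.filter_false_of_mem, Finset.sum_empty]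
    intro q _ h
    exact h fun j => j.elim0
  | (m + 1) =>
    have hr : ∀ a : Fin (m + 1), α 0 ≠ α a.succ := by
      intro a h
      exact Fin.succ_ne_zero a (hα h).symm
    have hstep1 : ∑ q ∈ ((Finset.univ ×ˢ Finset.univ.filter fun γ : Fin (m + 1) → Fin N =>
          ∀ i j, i < j → γ i < γ j).filter fun q => ¬ ∀ j, q.2 j ≠ q.1),
        (R (α 0) q.1 * (Matrix.of fun i j => R (α i.succ) (q.2 j)).det) •
          (c q.1 * (List.ofFn fun i => c (q.2 i)).prod)
        = ∑ q ∈ ((Finset.univ : Finset (Fin (m + 1))) ×ˢ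
            Finset.univ.filter fun β : Fin (m + 1) → Fin N => ∀ i j, i < j → β i < β j),
          (R (α 0) (q.2 q.1) * (Matrix.of fun i j => R (α i.succ) (q.2 j)).det) •
            (c (q.2 q.1) * (List.ofFn fun i => c (q.2 i)).prod) := by
      refine Finset.sum_bij'
        (i := fun q _ => ((⟨min (gcmPos q.2 q.1) m, Nat.lt_succ_of_le (min_le_right _ _)⟩ :
            Fin (m + 1)), q.2))
        (j := fun q _ => (q.2 q.1, q.2)) ?hi ?hj ?left ?right ?h
      case hi =>
        intro q hq
        simp only [Finset.mem_filter, Finset.mem_product, Finset.mem_univ, true_and] at hq ⊢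
        exact hq.1
      case hj =>
        intro q hq
        simp only [Finset.mem_filter, Finset.mem_product, Finset.mem_univ, true_and] at hq ⊢
        refine ⟨hq, ?_⟩
        intro h
        exact h q.1 rfl
      case left =>
        intro q hq
        simp only [Finset.mem_filter, Finset.mem_product, Finset.mem_univ, true_and,
          not_forall, not_not] at hq
        obtain ⟨hmono, j₀, hj₀⟩ := hq
        have hβ : StrictMono q.2 := fun a b h => hmono a b h
        have hpos : gcmPos q.2 q.1 = (j₀ : ℕ) := by rw [← hj₀]; exact gcm_pos_self hβ j₀
        have hidx : (⟨min (gcmPos q.2 q.1) m, Nat.lt_succ_of_le (min_le_right _ _)⟩ :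
            Fin (m + 1)) = j₀ := by
          apply Fin.ext
          simp only [hpos]
          exact min_eq_left (Nat.lt_succ_iff.mp j₀.isLt)
        refine Prod.ext ?_ rfl
        show q.2 (⟨min (gcmPos q.2 q.1) m, Nat.lt_succ_of_le (min_le_right _ _)⟩ :
            Fin (m + 1)) = q.1
        rw [hidx, hj₀]
      case right =>
        intro q hq
        simp only [Finset.mem_filter, Finset.mem_product, Finset.mem_univ, true_and] at hq
        have hβ : StrictMono q.2 := fun a b h => hq a b h
        have hpos : gcmPos q.2 (q.2 q.1) = (q.1 : ℕ) := gcm_pos_self hβ q.1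
        refine Prod.ext ?_ rfl
        apply Fin.ext
        simp only [hpos]
        exact min_eq_left (Nat.lt_succ_iff.mp q.1.isLt)
      case h =>
        intro q hq
        simp only [Finset.mem_filter, Finset.mem_product, Finset.mem_univ, true_and,
          not_forall, not_not] at hq
        obtain ⟨hmono, j₀, hj₀⟩ := hq
        have hβ : StrictMono q.2 := fun a b h => hmono a b h
        have hpos : gcmPos q.2 q.1 = (j₀ : ℕ) := by rw [← hj₀]; exact gcm_pos_self hβ j₀
        have hidx : (⟨min (gcmPos q.2 q.1) m, Nat.lt_succ_of_le (min_le_right _ _)⟩ :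
            Fin (m + 1)) = j₀ := by
          apply Fin.ext
          simp only [hpos]
          exact min_eq_left (Nat.lt_succ_iff.mp j₀.isLt)
        simp only [hidx, hj₀]
    rw [hstep1]
    have hstep2 : ∑ q ∈ ((Finset.univ : Finset (Fin (m + 1))) ×ˢ
            Finset.univ.filter fun β : Fin (m + 1) → Fin N => ∀ i j, i < j → β i < β j),
          (R (α 0) (q.2 q.1) * (Matrix.of fun i j => R (α i.succ) (q.2 j)).det) •
            (c (q.2 q.1) * (List.ofFn fun i => c (q.2 i)).prod)
        = ∑ q ∈ ((Finset.univ : Finset (Fin (m + 1))) ×ˢ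
            Finset.univ.filter fun β : Fin (m + 1) → Fin N => ∀ i j, i < j → β i < β j),
          ((-1 : ℝ) ^ gcmPos (q.2 ∘ q.1.succAbove) (q.2 q.1) * R (α 0) (q.2 q.1) *
            (Matrix.of fun a b => R (α a.succ)
              ((Fin.insertNth (α := fun _ => Fin N)
                ⟨gcmPos (q.2 ∘ q.1.succAbove) (q.2 q.1),
                  Nat.lt_succ_of_le (gcmPos_le (q.2 ∘ q.1.succAbove) (q.2 q.1))⟩
                (q.2 q.1) (q.2 ∘ q.1.succAbove)) b)).det) •
            (List.ofFn fun i => c ((q.2 ∘ q.1.succAbove) i)).prod := by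
      refine Finset.sum_congr rfl fun q hq => ?_
      simp only [Finset.mem_filter, Finset.mem_product, Finset.mem_univ, true_and] at hq
      have hβ : StrictMono q.2 := fun a b h => hq a b h
      have hpos : gcmPos (q.2 ∘ q.1.succAbove) (q.2 q.1) = (q.1 : ℕ) :=
        gcm_pos_succAbove hβ q.1
      have hidx : (⟨gcmPos (q.2 ∘ q.1.succAbove) (q.2 q.1),
          Nat.lt_succ_of_le (gcmPos_le (q.2 ∘ q.1.succAbove) (q.2 q.1))⟩ : Fin (m + 1))
          = q.1 := Fin.ext hpos
      have heta : Fin.insertNth (α := fun _ => Fin N) q.1 (q.2 q.1) (q.2 ∘ q.1.succAbove)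
          = q.2 := gcm_eta q.2 q.1
      rw [hidx, heta, hpos, gcm_B c hc q.2 hβ q.1, smul_smul]
      simp only [Function.comp]
      congr 1
      ring
    rw [hstep2]
    have hstep3 : ∑ q ∈ ((Finset.univ ×ˢ Finset.univ.filter fun γ : Fin m → Fin N =>
          ∀ i j, i < j → γ i < γ j).filter fun q => ∀ j, q.2 j ≠ q.1),
        ((-1 : ℝ) ^ gcmPos q.2 q.1 * R (α 0) q.1 *
          (Matrix.of fun a b => R (α a.succ)
            ((Fin.insertNth (α := fun _ => Fin N)
              ⟨gcmPos q.2 q.1, Nat.lt_succ_of_le (gcmPos_le q.2 q.1)⟩ q.1 q.2) b)).det) •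
          (List.ofFn fun i => c (q.2 i)).prod
        = ∑ q ∈ ((Finset.univ : Finset (Fin (m + 1))) ×ˢ
            Finset.univ.filter fun β : Fin (m + 1) → Fin N => ∀ i j, i < j → β i < β j),
          ((-1 : ℝ) ^ gcmPos (q.2 ∘ q.1.succAbove) (q.2 q.1) * R (α 0) (q.2 q.1) *
            (Matrix.of fun a b => R (α a.succ)
              ((Fin.insertNth (α := fun _ => Fin N)
                ⟨gcmPos (q.2 ∘ q.1.succAbove) (q.2 q.1),
                  Nat.lt_succ_of_le (gcmPos_le (q.2 ∘ q.1.succAbove) (q.2 q.1))⟩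
                (q.2 q.1) (q.2 ∘ q.1.succAbove)) b)).det) •
            (List.ofFn fun i => c ((q.2 ∘ q.1.succAbove) i)).prod :=
      gcm_bij m (fun p : Fin N × (Fin m → Fin N) =>
        ((-1 : ℝ) ^ gcmPos p.2 p.1 * R (α 0) p.1 *
          (Matrix.of fun a b => R (α a.succ)
            ((Fin.insertNth (α := fun _ => Fin N)
              ⟨gcmPos p.2 p.1, Nat.lt_succ_of_le (gcmPos_le p.2 p.1)⟩ p.1 p.2) b)).det) •
          (List.ofFn fun i => c (p.2 i)).prod)
    rw [← hstep3]
    rw [Finset.sum_filter, Finset.sum_product, Finset.sum_comm]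
    refine Finset.sum_eq_zero fun γ hγmem => ?_
    simp only [Finset.mem_filter, Finset.mem_univ, true_and] at hγmem
    have hγs : StrictMono γ := fun a b h => hγmem a b h
    have hite : ∀ ν : Fin N,
        (if (∀ j, γ j ≠ ν) then
          ((-1 : ℝ) ^ gcmPos γ ν * R (α 0) ν *
            (Matrix.of fun a b => R (α a.succ)
              ((Fin.insertNth (α := fun _ => Fin N)
                ⟨gcmPos γ ν, Nat.lt_succ_of_le (gcmPos_le γ ν)⟩ ν γ) b)).det) •
            (List.ofFn fun i => c (γ i)).prod
          else 0)
        = (if (∀ j, γ j ≠ ν) then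
            ((-1 : ℝ) ^ gcmPos γ ν * R (α 0) ν *
              (Matrix.of fun a b => R (α a.succ)
                ((Fin.insertNth (α := fun _ => Fin N)
                  ⟨gcmPos γ ν, Nat.lt_succ_of_le (gcmPos_le γ ν)⟩ ν γ) b)).det)
            else 0) • (List.ofFn fun i => c (γ i)).prod := by
      intro ν
      split_ifs with h
      · rfl
      · rw [zero_smul]
    rw [Finset.sum_congr rfl fun ν _ => hite ν, ← Finset.sum_smul]
    have h0 : ∑ ν ∈ Finset.univ.filter (fun ν => ∀ j, γ j ≠ ν),
        ((-1 : ℝ) ^ gcmPos γ ν * R (α 0) ν *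
          (Matrix.of fun a b => R (α a.succ)
            ((Fin.insertNth (α := fun _ => Fin N)
              ⟨gcmPos γ ν, Nat.lt_succ_of_le (gcmPos_le γ ν)⟩ ν γ) b)).det) = 0 :=
      gcm_zero R hR (α 0) (fun a => α a.succ) hr hγs
    rw [← Finset.sum_filter, h0, zero_smul]

lemma gcm_main {A : Type*} [Ring A] [Algebra ℝ A] {N : ℕ} (c : Fin N → A)
    (hc : ∀ μ ν, c μ * c ν + c ν * c μ = if μ = ν then (2 : A) else 0)
    (R : Matrix (Fin N) (Fin N) ℝ) (hR : R * Rᵀ = 1) :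
    ∀ (k : ℕ) (α : Fin k → Fin N), Function.Injective α →
      (List.ofFn fun i => ∑ ν, R (α i) ν • c ν).prod
        = ∑ β ∈ Finset.univ.filter (fun β : Fin k → Fin N => ∀ i j, i < j → β i < β j),
            (Matrix.of fun i j => R (α i) (β j)).det • (List.ofFn fun i => c (β i)).prod := by
  classical
  intro k
  induction k with
  | zero =>
    intro α _
    have h1 : (Finset.univ.filter fun β : Fin 0 → Fin N => ∀ i j, i < j → β i < β j)
        = Finset.univ := Finset.filter_true_of_mem fun β _ i j hij => i.elim0
    rw [h1, Fintype.sum_unique]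
    simp [Matrix.det_fin_zero]
  | succ k IH =>
    intro α hα
    have hα' : Function.Injective fun i : Fin k => α i.succ := by
      intro a b h
      exact Fin.succ_injective k (hα h)
    have hIH : (List.ofFn fun i : Fin k => ∑ ν, R (α i.succ) ν • c ν).prod
        = ∑ β ∈ Finset.univ.filter (fun β : Fin k → Fin N => ∀ i j, i < j → β i < β j),
            (Matrix.of fun i j => R (α i.succ) (β j)).det •
              (List.ofFn fun i => c (β i)).prod :=
      IH (fun i => α i.succ) hα'
    rw [List.ofFn_succ, List.prod_cons, hIH, Finset.sum_mul_sum]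
    simp_rw [smul_mul_assoc, mul_smul_comm, smul_smul]
    rw [← Finset.sum_product']
    rw [← Finset.sum_filter_add_sum_filter_not _
      (fun q : Fin N × (Fin k → Fin N) => ∀ j, q.2 j ≠ q.1)]
    rw [gcm_out c hc R k α, gcm_in c hc R hR k α hα, add_zero]

theorem gaussian_conj_monomial {A : Type*} [Ring A] [Algebra ℝ A] [StarRing A]
    (n k : ℕ) (c : Fin (2 * n) → A)
    (hc : ∀ μ ν, c μ * c ν + c ν * c μ = if μ = ν then (2 : A) else 0)
    (U : A) (hU₁ : star U * U = 1) (hU₂ : U * star U = 1)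
    (R : Matrix (Fin (2 * n)) (Fin (2 * n)) ℝ) (hR : R * Rᵀ = 1) (hdet : R.det = 1)
    (hconj : ∀ μ, star U * c μ * U = ∑ ν, R μ ν • c ν)
    (S : Finset (Fin (2 * n))) (hS : S.card = k) :
    star U * (List.ofFn fun i : Fin k => c (S.orderIsoOfFin hS i)).prod * U =
      ∑ β ∈ Finset.univ.filter
          (fun β : Fin k → Fin (2 * n) => ∀ i j : Fin k, i < j → β i < β j),
        (Matrix.of fun i j : Fin k => R (S.orderIsoOfFin hS i) (β j)).det •
          (List.ofFn fun i : Fin k => c (β i)).prod := by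
  have hU₂' : ∀ x : A, U * (star U * x) = x := fun x => by rw [← mul_assoc, hU₂, one_mul]
  have conj : ∀ L : List A, star U * L.prod * U = (L.map fun a => star U * a * U).prod := by
    intro L
    induction L with
    | nil => simpa using hU₁
    | cons a L ihl =>
      rw [List.map_cons, List.prod_cons, List.prod_cons, ← ihl]
      simp only [mul_assoc]
      rw [hU₂']
  rw [conj, List.map_ofFn]
  have hfun : ((fun a => star U * a * U) ∘ fun i : Fin k => c (S.orderIsoOfFin hS i))
      = fun i : Fin k => ∑ ν, R (S.orderIsoOfFin hS i) ν • c ν := by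
    funext i
    exact hconj _
  rw [hfun]
  have hmono : StrictMono fun i : Fin k => ((S.orderIsoOfFin hS i : Fin (2 * n))) := by
    intro a b hab
    simpa only [Finset.coe_orderIsoOfFin_apply] using (S.orderEmbOfFin hS).strictMono hab
  exact gcm_main c hc R hR k (fun i => (S.orderIsoOfFin hS i : Fin (2 * n))) hmono.injective
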